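/- Second Ursell function monotonicity (Griffiths-type): for the ferromagnetic Ising model on a finite graph with no external field, the two-point function u₂(σ_{j₁}, σ_{j₂}) = ⟨σ_{j₁}σ_{j₂}⟩ is non-decreasing in each coupling J_{u₀v₀}, i.e., ∂⟨σ_{j₁}σ_{j₂}⟩/∂J_{u₀v₀} = ⟨σ_{j₁}σ_{j₂}σ_{u₀}σ_{v₀}⟩ - ⟨σ_{j₁}σ_{j₂}⟩⟨σ_{u₀}σ_{v₀}⟩ ≥ 0. -/

import Mathlib

open scoped Classical BigOperators

def spin {V : Type*} (σ : V → Bool) (u : V) : ℝ := if σ u then 1 else -1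

def tweak {V : Type*} [DecidableEq V] (J : V → V → ℝ) (u₀ v₀ : V) (t : ℝ) :
    V → V → ℝ := fun u v =>
  if (u = u₀ ∧ v = v₀) ∨ (u = v₀ ∧ v = u₀) then t else J u v

noncomputable def isingEv {V : Type*} [Fintype V] [DecidableEq V]
    (K : V → V → ℝ) (f : (V → Bool) → ℝ) : ℝ :=
  (∑ σ : V → Bool, f σ * Real.exp ((1 / 2) * ∑ u, ∑ v, K u v * spin σ u * spin σ v)) /
    (∑ σ : V → Bool, Real.exp ((1 / 2) * ∑ u, ∑ v, K u v * spin σ u * spin σ v))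

set_option linter.unusedSectionVars false

section aux
variable {V : Type*} [Fintype V] [DecidableEq V]

lemma spin_mul_self (σ : V → Bool) (v : V) : spin σ v * spin σ v = 1 := by
  unfold spin; cases σ v <;> norm_num

lemma spin_cases (σ : V → Bool) (v : V) : spin σ v = 1 ∨ spin σ v = -1 := by
  unfold spin; cases σ v <;> simp

noncomputable def chi (m : V → Bool) (σ : V → Bool) : ℝ :=
  ∏ v, (if m v then spin σ v else 1)

def SRep (f : (V → Bool) → ℝ) : Prop :=
  ∃ c : (V → Bool) → ℝ, (∀ m, 0 ≤ c m) ∧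
    ∀ σ, f σ = ∑ m : V → Bool, c m * chi m σ

lemma chi_mul (m m' σ : V → Bool) :
    chi m σ * chi m' σ = chi (fun v => xor (m v) (m' v)) σ := by
  unfold chi
  rw [← Finset.prod_mul_distrib]
  refine Finset.prod_congr rfl fun v _ => ?_
  cases hm : m v <;> cases hm' : m' v <;> simp [hm, hm', spin_mul_self]

lemma srep_const {c : ℝ} (hc : 0 ≤ c) : SRep (fun _ : V → Bool => c) := by
  refine ⟨fun m => if (fun _ => false) = m then c else 0, fun m => by positivity, fun σ => ?_⟩
  have : ∀ m ∈ Finset.univ,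
      (if (fun _ => false) = m then c else 0) * chi m σ
        = if (fun _ => false) = m then c * chi m σ else 0 := by
    intro m _; by_cases h : (fun _ : V => false) = m <;> simp [h]
  rw [Finset.sum_congr rfl this, Finset.sum_ite_eq]
  simp [chi]

lemma srep_spin (i : V) : SRep (fun σ : V → Bool => spin σ i) := by
  refine ⟨fun m => if (fun v => decide (v = i)) = m then 1 else 0,
    fun m => by positivity, fun σ => ?_⟩
  have : ∀ m ∈ Finset.univ,
      (if (fun v => decide (v = i)) = m then (1:ℝ) else 0) * chi m σ
        = if (fun v => decide (v = i)) = m then chi m σ else 0 := by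
    intro m _; by_cases h : (fun v : V => decide (v = i)) = m <;> simp [h]
  rw [Finset.sum_congr rfl this, Finset.sum_ite_eq]
  simp only [Finset.mem_univ, if_true, chi]
  have : (∏ v, if (fun v => decide (v = i)) v then spin σ v else 1)
      = ∏ v, (if v = i then spin σ v else 1) :=
    Finset.prod_congr rfl fun v _ => by by_cases h : v = i <;> simp [h]
  rw [this, Finset.prod_ite_eq' Finset.univ i (fun v => spin σ v)]
  simp

lemma srep_add {f g : (V → Bool) → ℝ} (hf : SRep f) (hg : SRep g) :
    SRep (fun σ => f σ + g σ) := by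
  obtain ⟨c, hc, hcf⟩ := hf
  obtain ⟨d, hd, hdg⟩ := hg
  exact ⟨fun m => c m + d m, fun m => add_nonneg (hc m) (hd m),
    fun σ => by simp [hcf σ, hdg σ, add_mul, Finset.sum_add_distrib]⟩

lemma srep_mul {f g : (V → Bool) → ℝ} (hf : SRep f) (hg : SRep g) :
    SRep (fun σ => f σ * g σ) := by
  obtain ⟨c, hc, hcf⟩ := hf
  obtain ⟨d, hd, hdg⟩ := hg
  refine ⟨fun k => ∑ m : V → Bool, ∑ m' : V → Bool,
      if (fun v => xor (m v) (m' v)) = k then c m * d m' else 0,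
    fun k => Finset.sum_nonneg fun m _ => Finset.sum_nonneg fun m' _ => by
      split
      · exact mul_nonneg (hc m) (hd m')
      · exact le_refl 0, fun σ => ?_⟩
  calc f σ * g σ
      = ∑ m : V → Bool, ∑ m' : V → Bool, c m * d m' * chi (fun v => xor (m v) (m' v)) σ := by
        rw [hcf σ, hdg σ, Finset.sum_mul_sum]
        refine Finset.sum_congr rfl fun m _ => Finset.sum_congr rfl fun m' _ => ?_
        rw [← chi_mul]; ring
    _ = ∑ m : V → Bool, ∑ m' : V → Bool, ∑ k : V → Bool,
          if (fun v => xor (m v) (m' v)) = k then c m * d m' * chi k σ else 0 := by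
        refine Finset.sum_congr rfl fun m _ => Finset.sum_congr rfl fun m' _ => ?_
        rw [Finset.sum_ite_eq]; simp
    _ = ∑ k : V → Bool, ∑ m : V → Bool, ∑ m' : V → Bool,
          if (fun v => xor (m v) (m' v)) = k then c m * d m' * chi k σ else 0 := by
        rw [Finset.sum_congr rfl fun m (_ : m ∈ Finset.univ) => Finset.sum_comm]
        exact Finset.sum_comm
    _ = ∑ k : V → Bool, (∑ m : V → Bool, ∑ m' : V → Bool,
          if (fun v => xor (m v) (m' v)) = k then c m * d m' else 0) * chi k σ := by
        refine Finset.sum_congr rfl fun k _ => ?_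
        rw [Finset.sum_mul]
        refine Finset.sum_congr rfl fun m _ => ?_
        rw [Finset.sum_mul]
        exact (Finset.sum_congr rfl fun m' _ => by
          by_cases h : (fun v => xor (m v) (m' v)) = k <;> simp [h]).symm

lemma sum_chi_nonneg (m : V → Bool) : 0 ≤ ∑ σ : V → Bool, chi m σ := by
  by_cases hm : ∀ v, m v = false
  · have : ∀ σ : V → Bool, chi m σ = 1 := fun σ => by
      unfold chi; exact Finset.prod_eq_one fun v _ => by simp [hm v]
    simp [this]
  · push_neg at hm
    obtain ⟨v₀, hv₀⟩ := hm
    rw [Bool.ne_false_iff] at hv₀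
    have hflip : ∀ σ : V → Bool, chi m (Function.update σ v₀ (!σ v₀)) = - chi m σ := by
      intro σ
      unfold chi
      rw [← Finset.mul_prod_erase Finset.univ _ (Finset.mem_univ v₀),
          ← Finset.mul_prod_erase Finset.univ
            (fun v => if m v then spin σ v else 1) (Finset.mem_univ v₀)]
      have h1 : (if m v₀ then spin (Function.update σ v₀ (!σ v₀)) v₀ else 1)
          = - (if m v₀ then spin σ v₀ else 1) := by
        rw [hv₀]; simp only [if_true]
        unfold spin
        rw [Function.update_self]
        cases σ v₀ <;> norm_num
      have h2 : ∀ v ∈ Finset.univ.erase v₀,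
          (if m v then spin (Function.update σ v₀ (!σ v₀)) v else 1)
            = (if m v then spin σ v else 1) := by
        intro v hv
        have hne := Finset.ne_of_mem_erase hv
        unfold spin
        rw [Function.update_of_ne hne]
      rw [Finset.prod_congr rfl h2, h1]
      ring
    have hzero : ∑ σ : V → Bool, chi m σ = 0 := by
      refine Finset.sum_involution (fun σ _ => Function.update σ v₀ (!σ v₀))
        (fun σ _ => by rw [hflip σ]; ring)
        (fun σ _ _ h => ?_) (fun σ _ => Finset.mem_univ _) (fun σ _ => ?_)
      · have h2 := congrFun h v₀
        simp only [Function.update_self] at h2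
        cases hs : σ v₀ <;> rw [hs] at h2 <;> simp at h2
      · funext v
        by_cases h : v = v₀
        · subst h; simp
        · simp [Function.update_of_ne h]
    rw [hzero]

lemma srep_sum_nonneg {f : (V → Bool) → ℝ} (hf : SRep f) : 0 ≤ ∑ σ : V → Bool, f σ := by
  obtain ⟨c, hc, hcf⟩ := hf
  rw [Finset.sum_congr rfl fun σ _ => hcf σ, Finset.sum_comm]
  refine Finset.sum_nonneg fun m _ => ?_
  rw [← Finset.mul_sum]
  exact mul_nonneg (hc m) (sum_chi_nonneg m)

lemma srep_prod {ι : Type*} (s : Finset ι) (f : ι → (V → Bool) → ℝ)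
    (hf : ∀ i ∈ s, SRep (f i)) : SRep (fun σ => ∏ i ∈ s, f i σ) := by
  induction s using Finset.induction_on with
  | empty => simpa using srep_const (zero_le_one)
  | insert a s' hx ih =>
    simp only [Finset.prod_insert hx]
    exact srep_mul (hf a (Finset.mem_insert_self a s'))
      (ih fun i hi => hf i (Finset.mem_insert_of_mem hi))

lemma srep_congr {f g : (V → Bool) → ℝ} (h : ∀ σ, f σ = g σ) (hf : SRep f) : SRep g := by
  obtain ⟨c, h1, h2⟩ := hf
  exact ⟨c, h1, fun σ => (h σ).symm.trans (h2 σ)⟩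

lemma exp_pm (c x : ℝ) (hx : x = 1 ∨ x = -1) :
    Real.exp (c * x) = Real.cosh c + Real.sinh c * x := by
  rcases hx with h | h <;> subst h
  · rw [mul_one, mul_one, Real.cosh_add_sinh]
  · rw [show c * (-1:ℝ) = -c by ring, ← Real.cosh_sub_sinh]; ring

lemma srep_exp_H (K : V → V → ℝ) (hK : ∀ u v, 0 ≤ K u v) :
    SRep (fun σ : V → Bool =>
      Real.exp ((1 / 2) * ∑ u, ∑ v, K u v * spin σ u * spin σ v)) := by
  have hrw : ∀ σ : V → Bool,
      Real.exp ((1 / 2) * ∑ u, ∑ v, K u v * spin σ u * spin σ v)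
        = ∏ u, ∏ v, Real.exp ((1 / 2) * K u v * (spin σ u * spin σ v)) := by
    intro σ
    rw [Finset.mul_sum, Real.exp_sum]
    refine Finset.prod_congr rfl fun u _ => ?_
    rw [Finset.mul_sum, Real.exp_sum]
    refine Finset.prod_congr rfl fun v _ => ?_
    congr 1; ring
  refine srep_congr (fun σ => (hrw σ).symm) ?_
  refine srep_prod _ _ fun u _ => srep_prod _ _ fun v _ => ?_
  have hc0 : 0 ≤ (1 / 2) * K u v := by have := hK u v; positivity
  refine srep_congr (fun σ => ?_)
    (srep_add (srep_const (Real.cosh_pos ((1 / 2) * K u v)).le)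
      (srep_mul (srep_const (by positivity : (0:ℝ) ≤ Real.sinh ((1 / 2) * K u v)))
        (srep_mul (srep_spin u) (srep_spin v))))
  rw [exp_pm ((1 / 2) * K u v) (spin σ u * spin σ v) ?pm]
  rcases spin_cases σ u with h | h <;> rcases spin_cases σ v with h' | h' <;>
    rw [h, h'] <;> norm_num

end aux

section part2
variable {V : Type*} [Fintype V] [DecidableEq V]

noncomputable def Ew (K : V → V → ℝ) (σ : V → Bool) : ℝ :=
  Real.exp ((1 / 2) * ∑ u, ∑ v, K u v * spin σ u * spin σ v)

lemma griffiths1 (K : V → V → ℝ) (hK : ∀ u v, 0 ≤ K u v) {f : (V → Bool) → ℝ}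
    (hf : SRep f) : 0 ≤ ∑ σ : V → Bool, f σ * Ew K σ :=
  srep_sum_nonneg (srep_mul hf (srep_exp_H K hK))

def mix (σ t : V → Bool) : V → Bool := fun v => σ v == t v

lemma spin_mix (σ t : V → Bool) (v : V) :
    spin (mix σ t) v = spin σ v * spin t v := by
  unfold spin mix; cases σ v <;> cases t v <;> norm_num

lemma mix_involutive (σ : V → Bool) : Function.Involutive (mix σ) := by
  intro t; funext v; unfold mix; cases σ v <;> cases t v <;> rfl

lemma Ew_mul_mix (J : V → V → ℝ) (σ t : V → Bool) :
    Ew J σ * Ew J (mix σ t)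
      = Ew (fun u v => J u v * (1 + spin t u * spin t v)) σ := by
  unfold Ew
  rw [← Real.exp_add]
  congr 1
  rw [← mul_add]
  congr 1
  rw [← Finset.sum_add_distrib]
  refine Finset.sum_congr rfl fun u _ => ?_
  rw [← Finset.sum_add_distrib]
  refine Finset.sum_congr rfl fun v _ => ?_
  rw [spin_mix, spin_mix]
  ring

lemma key_ineq (J : V → V → ℝ) (hferro : ∀ u v, 0 ≤ J u v) (j₁ j₂ u₀ v₀ : V) :
    0 ≤ (∑ σ : V → Bool, (spin σ j₁ * spin σ j₂ * spin σ u₀ * spin σ v₀) * Ew J σ)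
          * (∑ σ : V → Bool, Ew J σ)
        - (∑ σ : V → Bool, (spin σ j₁ * spin σ j₂) * Ew J σ)
          * (∑ σ : V → Bool, (spin σ u₀ * spin σ v₀) * Ew J σ) := by
  have hstep1 :
      (∑ σ : V → Bool, (spin σ j₁ * spin σ j₂ * spin σ u₀ * spin σ v₀) * Ew J σ)
          * (∑ σ : V → Bool, Ew J σ)
        - (∑ σ : V → Bool, (spin σ j₁ * spin σ j₂) * Ew J σ)
          * (∑ σ : V → Bool, (spin σ u₀ * spin σ v₀) * Ew J σ)
      = ∑ σ : V → Bool, ∑ τ : V → Bool,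
          (spin σ j₁ * spin σ j₂) * (spin σ u₀ * spin σ v₀ - spin τ u₀ * spin τ v₀)
            * (Ew J σ * Ew J τ) := by
    rw [Finset.sum_mul_sum, Finset.sum_mul_sum, ← Finset.sum_sub_distrib]
    refine Finset.sum_congr rfl fun σ _ => ?_
    rw [← Finset.sum_sub_distrib]
    refine Finset.sum_congr rfl fun τ _ => ?_
    ring
  rw [hstep1]
  have hstep2 : ∀ σ : V → Bool,
      (∑ τ : V → Bool,
        (spin σ j₁ * spin σ j₂) * (spin σ u₀ * spin σ v₀ - spin τ u₀ * spin τ v₀)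
          * (Ew J σ * Ew J τ))
      = ∑ t : V → Bool,
        (1 - spin t u₀ * spin t v₀) *
          ((spin σ j₁ * spin σ j₂ * spin σ u₀ * spin σ v₀)
            * Ew (fun u v => J u v * (1 + spin t u * spin t v)) σ) := by
    intro σ
    rw [← Equiv.sum_comp ((mix_involutive σ).toPerm (mix σ))
      (fun τ => (spin σ j₁ * spin σ j₂) * (spin σ u₀ * spin σ v₀ - spin τ u₀ * spin τ v₀)
          * (Ew J σ * Ew J τ))]
    refine Finset.sum_congr rfl fun t _ => ?_
    have hperm : ((mix_involutive σ).toPerm (mix σ)) t = mix σ t := rfl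
    rw [hperm, spin_mix, spin_mix, Ew_mul_mix]
    ring
  rw [Finset.sum_congr rfl fun σ _ => hstep2 σ, Finset.sum_comm]
  refine Finset.sum_nonneg fun t _ => ?_
  rw [← Finset.mul_sum]
  refine mul_nonneg ?_ ?_
  · rcases spin_cases t u₀ with h | h <;> rcases spin_cases t v₀ with h' | h' <;>
      rw [h, h'] <;> norm_num
  · refine griffiths1 _ (fun u v => ?_) ?_
    · refine mul_nonneg (hferro u v) ?_
      rcases spin_cases t u with h | h <;> rcases spin_cases t v with h' | h' <;>
        rw [h, h'] <;> norm_num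
    · exact srep_mul (srep_mul (srep_mul (srep_spin j₁) (srep_spin j₂)) (srep_spin u₀))
        (srep_spin v₀)

end part2

section part3
variable {V : Type*} [Fintype V] [DecidableEq V]

variable (J : V → V → ℝ) (u₀ v₀ : V)

/-- couplings with the tweaked entries removed -/
def Jrest : V → V → ℝ := fun u v =>
  if (u = u₀ ∧ v = v₀) ∨ (u = v₀ ∧ v = u₀) then 0 else J u v

lemma exponent_eq (hne : u₀ ≠ v₀) (t : ℝ) (σ : V → Bool) :
    (1 / 2) * ∑ u, ∑ v, tweak J u₀ v₀ t u v * spin σ u * spin σ v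
      = t * (spin σ u₀ * spin σ v₀)
        + (1 / 2) * ∑ u, ∑ v, Jrest J u₀ v₀ u v * spin σ u * spin σ v := by
  have split : ∀ u v, tweak J u₀ v₀ t u v * spin σ u * spin σ v
      = (if (u = u₀ ∧ v = v₀) ∨ (u = v₀ ∧ v = u₀) then t * spin σ u * spin σ v else 0)
        + Jrest J u₀ v₀ u v * spin σ u * spin σ v := by
    intro u v
    unfold tweak Jrest
    by_cases h : (u = u₀ ∧ v = v₀) ∨ (u = v₀ ∧ v = u₀) <;> simp [h]
  rw [Finset.sum_congr rfl fun u (_ : u ∈ Finset.univ) =>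
    Finset.sum_congr rfl fun v (_ : v ∈ Finset.univ) => split u v]
  rw [Finset.sum_congr rfl fun u (_ : u ∈ Finset.univ) => Finset.sum_add_distrib,
    Finset.sum_add_distrib]
  have inner : ∀ u, (∑ v, if (u = u₀ ∧ v = v₀) ∨ (u = v₀ ∧ v = u₀)
        then t * spin σ u * spin σ v else 0)
      = (if u = u₀ then t * spin σ u₀ * spin σ v₀ else 0)
        + (if u = v₀ then t * spin σ v₀ * spin σ u₀ else 0) := by
    intro u
    have summand : ∀ v, (if (u = u₀ ∧ v = v₀) ∨ (u = v₀ ∧ v = u₀)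
          then t * spin σ u * spin σ v else 0)
        = (if u = u₀ ∧ v = v₀ then t * spin σ u * spin σ v else 0)
          + (if u = v₀ ∧ v = u₀ then t * spin σ u * spin σ v else 0) := by
      intro v
      by_cases ha : u = u₀ ∧ v = v₀ <;> by_cases hb : u = v₀ ∧ v = u₀
      · exact absurd (ha.1.symm.trans hb.1) hne
      all_goals simp [ha, hb, hne, Ne.symm hne]
    rw [Finset.sum_congr rfl fun v (_ : v ∈ Finset.univ) => summand v,
      Finset.sum_add_distrib]
    congr 1
    · by_cases h1 : u = u₀
      · simp only [h1, true_and, if_true]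
        rw [Finset.sum_ite_eq' Finset.univ v₀ (fun v => t * spin σ u₀ * spin σ v)]
        simp
      · simp [h1]
    · by_cases h2 : u = v₀
      · simp only [h2, true_and, if_true]
        rw [Finset.sum_ite_eq' Finset.univ u₀ (fun v => t * spin σ v₀ * spin σ v)]
        simp
      · simp [h2]
  rw [Finset.sum_congr rfl fun u (_ : u ∈ Finset.univ) => inner u, Finset.sum_add_distrib,
    Finset.sum_ite_eq' Finset.univ u₀ (fun _ => t * spin σ u₀ * spin σ v₀),
    Finset.sum_ite_eq' Finset.univ v₀ (fun _ => t * spin σ v₀ * spin σ u₀)]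
  simp only [Finset.mem_univ, if_true]
  ring

lemma tweak_self (hsym : ∀ u v, J u v = J v u) :
    tweak J u₀ v₀ (J u₀ v₀) = J := by
  funext u v
  unfold tweak
  split
  · rename_i h
    rcases h with ⟨h1, h2⟩ | ⟨h1, h2⟩
    · rw [h1, h2]
    · rw [h1, h2]; exact hsym u₀ v₀
  · rfl

end part3

set_option maxHeartbeats 2000000 in
/-- Griffiths-type monotonicity of the two-point function: its derivative in the
coupling `J_{u₀v₀}` equals `⟨σ_{j₁}σ_{j₂}σ_{u₀}σ_{v₀}⟩ - ⟨σ_{j₁}σ_{j₂}⟩⟨σ_{u₀}σ_{v₀}⟩`,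
which is nonnegative. -/
theorem two_point_monotone {V : Type*} [Fintype V] [DecidableEq V]
    (J : V → V → ℝ) (hsym : ∀ u v, J u v = J v u) (hferro : ∀ u v, 0 ≤ J u v)
    (u₀ v₀ : V) (hne : u₀ ≠ v₀) (j₁ j₂ : V) :
    deriv (fun t => isingEv (tweak J u₀ v₀ t) (fun σ => spin σ j₁ * spin σ j₂))
        (J u₀ v₀)
      = isingEv J (fun σ => spin σ j₁ * spin σ j₂ * spin σ u₀ * spin σ v₀) -
          isingEv J (fun σ => spin σ j₁ * spin σ j₂) *
            isingEv J (fun σ => spin σ u₀ * spin σ v₀) ∧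
    0 ≤ isingEv J (fun σ => spin σ j₁ * spin σ j₂ * spin σ u₀ * spin σ v₀) -
          isingEv J (fun σ => spin σ j₁ * spin σ j₂) *
            isingEv J (fun σ => spin σ u₀ * spin σ v₀) := by
  set t₀ : ℝ := J u₀ v₀ with ht₀
  set A : (V → Bool) → ℝ := fun σ => spin σ u₀ * spin σ v₀ with hA
  set B : (V → Bool) → ℝ := fun σ =>
    (1 / 2) * ∑ u, ∑ v, Jrest J u₀ v₀ u v * spin σ u * spin σ v with hB
  set b : (V → Bool) → ℝ := fun σ => spin σ j₁ * spin σ j₂ with hb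
  set a : (V → Bool) → ℝ := fun σ => spin σ j₁ * spin σ j₂ * spin σ u₀ * spin σ v₀ with ha
  set Z : ℝ := ∑ σ : V → Bool, Ew J σ with hZdef
  have hZ : 0 < Z := Finset.sum_pos (fun σ _ => Real.exp_pos _) Finset.univ_nonempty
  -- exp at t₀ is the Ising weight
  have hE : ∀ σ : V → Bool, Real.exp (t₀ * A σ + B σ) = Ew J σ := by
    intro σ
    rw [← exponent_eq J u₀ v₀ hne t₀ σ, tweak_self J u₀ v₀ hsym]
    rfl
  -- isingEv in terms of Ew
  have hEv : ∀ f : (V → Bool) → ℝ,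
      isingEv J f = (∑ σ : V → Bool, f σ * Ew J σ) / Z := fun f => rfl
  -- the three sums
  set SA : ℝ := ∑ σ : V → Bool, a σ * Ew J σ with hSA
  set SB : ℝ := ∑ σ : V → Bool, b σ * Ew J σ with hSB
  set SG : ℝ := ∑ σ : V → Bool, A σ * Ew J σ with hSG
  have hkey : 0 ≤ SA * Z - SB * SG := key_ineq J hferro j₁ j₂ u₀ v₀
  have hdiff : isingEv J a - isingEv J b * isingEv J A = (SA * Z - SB * SG) / Z ^ 2 := by
    rw [hEv a, hEv b, hEv A, ← hSA, ← hSB, ← hSG]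
    field_simp
  constructor
  · -- derivative computation
    have hfun : (fun t => isingEv (tweak J u₀ v₀ t) b)
        = fun t => (∑ σ : V → Bool, b σ * Real.exp (t * A σ + B σ))
            / (∑ σ : V → Bool, Real.exp (t * A σ + B σ)) := by
      funext t
      unfold isingEv
      congr 1
      · refine Finset.sum_congr rfl fun σ _ => ?_
        rw [exponent_eq J u₀ v₀ hne t σ]
      · refine Finset.sum_congr rfl fun σ _ => ?_
        rw [exponent_eq J u₀ v₀ hne t σ]
    have hNd : HasDerivAt (fun t => ∑ σ : V → Bool, b σ * Real.exp (t * A σ + B σ))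
        (∑ σ : V → Bool, b σ * (Real.exp (t₀ * A σ + B σ) * A σ)) t₀ := by
      refine HasDerivAt.fun_sum fun σ _ => ?_
      exact (((hasDerivAt_mul_const (A σ)).add_const (B σ)).exp).const_mul (b σ)
    have hDd : HasDerivAt (fun t => ∑ σ : V → Bool, Real.exp (t * A σ + B σ))
        (∑ σ : V → Bool, Real.exp (t₀ * A σ + B σ) * A σ) t₀ := by
      refine HasDerivAt.fun_sum fun σ _ => ?_
      exact (((hasDerivAt_mul_const (A σ)).add_const (B σ)).exp)
    have hDval : (∑ σ : V → Bool, Real.exp (t₀ * A σ + B σ)) = Z := by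
      rw [hZdef]; exact Finset.sum_congr rfl fun σ _ => hE σ
    have hDne : (∑ σ : V → Bool, Real.exp (t₀ * A σ + B σ)) ≠ 0 := by
      rw [hDval]; exact hZ.ne'
    have hdiv := (hNd.fun_div hDd hDne)
    rw [hfun, hdiv.deriv]
    have e1 : (∑ σ : V → Bool, b σ * (Real.exp (t₀ * A σ + B σ) * A σ)) = SA := by
      rw [hSA]
      refine Finset.sum_congr rfl fun σ _ => ?_
      rw [hE σ, ha, hb, hA]
      ring
    have e2 : (∑ σ : V → Bool, b σ * Real.exp (t₀ * A σ + B σ)) = SB := by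
      rw [hSB]
      exact Finset.sum_congr rfl fun σ _ => by rw [hE σ]
    have e3 : (∑ σ : V → Bool, Real.exp (t₀ * A σ + B σ) * A σ) = SG := by
      rw [hSG]
      refine Finset.sum_congr rfl fun σ _ => ?_
      rw [hE σ]; ring
    rw [e1, e2, e3, hDval, hdiff]
  · rw [hdiff]
    exact div_nonneg hkey (by positivity)
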